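/- Generalized Thomson principle (lower bound without divergence-free test flows): let 𝒜, ℬ ⊆ H_N be disjoint and nonempty, let h be the equilibrium potential between 𝒜 and ℬ and cap_N(𝒜,ℬ) = 𝒟_N(h). Then for every real number ε, every function g : H_N → ℝ vanishing on 𝒜 ∪ ℬ, and every flow ψ with (div ψ)(𝒜) = 1 + ε, one has (1 + ε + Σ_{η ∉ 𝒜∪ℬ} h(η)(div ψ)(η))² ≤ cap_N(𝒜,ℬ) · ‖Φ_g − ψ‖²; in particular cap_N(𝒜,ℬ) · ‖Φ_g − ψ‖² ≥ 1 + 2ε + 2 Σ_{η ∉ 𝒜∪ℬ} h(η)(div ψ)(η). -/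

import Mathlib

open Filter Topology Finset
open scoped Classical

noncomputable section

/-- `a(n)`: `a(0)=1`, `a(n)=n^α` for `n ≥ 1`. -/
def aZR (α : ℝ) (n : ℕ) : ℝ := if n = 0 then 1 else (n : ℝ) ^ α

/-- `g(0)=0`, `g(n)=a(n)/a(n-1)` for `n ≥ 1`. -/
def gZR (α : ℝ) (n : ℕ) : ℝ := if n = 0 then 0 else aZR α n / aZR α (n - 1)

/-- The set of configurations of `N` particles on `S`. -/
def configs (S : Type*) [Fintype S] (N : ℕ) : Finset (S → ℕ) :=
  (Fintype.piFinset fun _ : S => Finset.range (N + 1)).filter fun η => ∑ x, η x = N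

/-- `σ^{x,y} η`: move one particle from `x` to `y` (identity if `x = y` or `η x = 0`). -/
def move {S : Type*} (x y : S) (η : S → ℕ) : S → ℕ :=
  if x = y ∨ η x = 0 then η
  else Function.update (Function.update η x (η x - 1)) y (η y + 1)

/-- The zero-range generator with jump rates `r`. -/
def LgenR {S : Type*} [Fintype S] (α : ℝ) (r : S → S → ℝ)
    (f : (S → ℕ) → ℝ) (η : S → ℕ) : ℝ :=
  ∑ x, ∑ y, gZR α (η x) * r x y * (f (move x y η) - f η)

/-- The Dirichlet form of the zero-range process. -/
def DirN {S : Type*} [Fintype S] (α : ℝ) (r : S → S → ℝ)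
    (μ : (S → ℕ) → ℝ) (N : ℕ) (f : (S → ℕ) → ℝ) : ℝ :=
  (1 / 2) * ∑ η ∈ configs S N, ∑ x, ∑ y,
    μ η * gZR α (η x) * r x y * (f (move x y η) - f η) ^ 2


/-- Adjacency `η ∼ ζ` on `H_N`. -/
def AdjZR {S : Type*} (r : S → S → ℝ) (η ζ : S → ℕ) : Prop :=
  ∃ x y : S, x ≠ y ∧ 1 ≤ η x ∧ 0 < r x y + r y x ∧ ζ = move x y η

/-- Conductance `c_N(η,ζ)`. -/
def condZR {S : Type*} [Fintype S] (α : ℝ) (r : S → S → ℝ) (μ : (S → ℕ) → ℝ)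
    (η ζ : S → ℕ) : ℝ :=
  ∑ x, ∑ y, if x ≠ y ∧ 1 ≤ η x ∧ ζ = move x y η
    then μ η * gZR α (η x) * r x y else 0

/-- Symmetrized conductance `c_N^s(η,ζ)`. -/
def csymZR {S : Type*} [Fintype S] (α : ℝ) (r : S → S → ℝ) (μ : (S → ℕ) → ℝ)
    (η ζ : S → ℕ) : ℝ :=
  (condZR α r μ η ζ + condZR α r μ ζ η) / 2

/-- The flow `Φ_f` associated with a function `f`. -/
def PhiF {S : Type*} [Fintype S] (α : ℝ) (r : S → S → ℝ) (μ : (S → ℕ) → ℝ)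
    (f : (S → ℕ) → ℝ) (η ζ : S → ℕ) : ℝ :=
  f η * condZR α r μ η ζ - f ζ * condZR α r μ ζ η

/-- Squared flow norm `‖φ‖²`. -/
def flowNormSq (S : Type*) [Fintype S] (α : ℝ) (r : S → S → ℝ) (μ : (S → ℕ) → ℝ)
    (N : ℕ) (φ : (S → ℕ) → (S → ℕ) → ℝ) : ℝ :=
  (1 / 2) * ∑ η ∈ configs S N, ∑ ζ ∈ configs S N,
    if AdjZR r η ζ then (φ η ζ) ^ 2 / csymZR α r μ η ζ else 0

/-- Divergence of a flow at a configuration. -/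
def divFlow (S : Type*) [Fintype S] (r : S → S → ℝ) (N : ℕ)
    (φ : (S → ℕ) → (S → ℕ) → ℝ) (η : S → ℕ) : ℝ :=
  ∑ ζ ∈ configs S N, if AdjZR r η ζ then φ η ζ else 0

set_option linter.unusedSectionVars false
section helpers
variable {S : Type*} [Fintype S]

lemma mem_configs {N : ℕ} {η : S → ℕ} : η ∈ configs S N ↔ ∑ x, η x = N := by
  simp only [configs, Finset.mem_filter, Fintype.mem_piFinset, Finset.mem_range]
  constructor
  · exact fun h => h.2
  · intro h
    refine ⟨fun x => ?_, h⟩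
    have : η x ≤ ∑ y, η y := Finset.single_le_sum (fun _ _ => Nat.zero_le _) (Finset.mem_univ x)
    omega

lemma move_apply_fst {x y : S} {η : S → ℕ} (hxy : x ≠ y) (hx : 1 ≤ η x) :
    move x y η x = η x - 1 := by
  unfold move
  rw [if_neg (by simp [hxy]; omega), Function.update_of_ne hxy, Function.update_self]

lemma move_apply_snd {x y : S} {η : S → ℕ} (hxy : x ≠ y) (hx : 1 ≤ η x) :
    move x y η y = η y + 1 := by
  unfold move
  rw [if_neg (by simp [hxy]; omega), Function.update_self]

lemma move_apply_other {x y z : S} {η : S → ℕ} (hzx : z ≠ x) (hzy : z ≠ y) :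
    move x y η z = η z := by
  unfold move
  split
  · rfl
  · rw [Function.update_of_ne hzy, Function.update_of_ne hzx]

lemma sum_move (x y : S) (η : S → ℕ) : ∑ z, move x y η z = ∑ z, η z := by
  by_cases hc : x = y ∨ η x = 0
  · rw [show move x y η = η from if_pos hc]
  · push_neg at hc
    obtain ⟨hxy, hx0⟩ := hc
    have hx : 1 ≤ η x := Nat.one_le_iff_ne_zero.mpr hx0
    have hxm : x ∈ Finset.univ \ ({y} : Finset S) := by simp [hxy]
    have e1 : ∑ z, move x y η z
        = move x y η y + ∑ z ∈ Finset.univ \ {y}, move x y η z := by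
      rw [← Finset.sum_update_of_mem (Finset.mem_univ y) (move x y η) (move x y η y)]
      exact Finset.sum_congr rfl fun z _ => by
        by_cases hz : z = y <;> simp [hz, Function.update_of_ne, Function.update_self]
    have e2 : ∑ z ∈ Finset.univ \ {y}, move x y η z
        = move x y η x + ∑ z ∈ (Finset.univ \ {y}) \ {x}, move x y η z := by
      rw [← Finset.sum_update_of_mem hxm (move x y η) (move x y η x)]
      exact Finset.sum_congr rfl fun z _ => by
        by_cases hz : z = x <;> simp [hz, Function.update_of_ne, Function.update_self]
    have e3 : ∑ z, η z = η y + ∑ z ∈ Finset.univ \ {y}, η z := by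
      rw [← Finset.sum_update_of_mem (Finset.mem_univ y) η (η y)]
      exact Finset.sum_congr rfl fun z _ => by
        by_cases hz : z = y <;> simp [hz, Function.update_of_ne, Function.update_self]
    have e4 : ∑ z ∈ Finset.univ \ {y}, η z = η x + ∑ z ∈ (Finset.univ \ {y}) \ {x}, η z := by
      rw [← Finset.sum_update_of_mem hxm η (η x)]
      exact Finset.sum_congr rfl fun z _ => by
        by_cases hz : z = x <;> simp [hz, Function.update_of_ne, Function.update_self]
    have e5 : ∑ z ∈ (Finset.univ \ {y}) \ {x}, move x y η z
        = ∑ z ∈ (Finset.univ \ {y}) \ {x}, η z := by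
      refine Finset.sum_congr rfl fun z hz => ?_
      simp only [Finset.mem_sdiff, Finset.mem_singleton] at hz
      exact move_apply_other hz.2 hz.1.2
    rw [e1, e2, e5, e3, e4, move_apply_fst hxy hx, move_apply_snd hxy hx]
    omega

lemma move_mem_configs {N : ℕ} {x y : S} {η : S → ℕ} (hη : η ∈ configs S N) :
    move x y η ∈ configs S N := by
  rw [mem_configs] at hη ⊢
  rw [sum_move]; exact hη

lemma move_inj {x y x' y' : S} {η : S → ℕ} (hxy : x ≠ y) (hx : 1 ≤ η x)
    (hxy' : x' ≠ y') (hx' : 1 ≤ η x') (hEq : move x y η = move x' y' η) :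
    x = x' ∧ y = y' := by
  have hxx : x = x' := by
    by_contra hne
    have h1 := congrFun hEq x
    rw [move_apply_fst hxy hx] at h1
    by_cases hxy2 : x = y'
    · subst hxy2
      rw [move_apply_snd hxy' hx'] at h1
      omega
    · rw [move_apply_other (Ne.intro hne) hxy2] at h1
      omega
  subst hxx
  refine ⟨rfl, ?_⟩
  by_contra hne
  have h1 := congrFun hEq y
  rw [move_apply_snd hxy hx, move_apply_other (Ne.symm hxy) hne] at h1
  omega

lemma move_move {x y : S} {η : S → ℕ} (hxy : x ≠ y) (hx : 1 ≤ η x) :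
    move y x (move x y η) = η := by
  have hy1 : 1 ≤ move x y η y := by rw [move_apply_snd hxy hx]; omega
  funext z
  by_cases hzx : z = x
  · subst hzx
    rw [move_apply_snd (Ne.symm hxy) hy1, move_apply_fst hxy hx]
    omega
  · by_cases hzy : z = y
    · subst hzy
      rw [move_apply_fst (Ne.symm hxy) hy1, move_apply_snd hxy hx]
      omega
    · rw [move_apply_other hzy hzx, move_apply_other hzx hzy]

lemma adjZR_symm {r : S → S → ℝ} {η ζ : S → ℕ} (hadj : AdjZR r η ζ) : AdjZR r ζ η := by
  obtain ⟨x, y, hxy, hx, hr, rfl⟩ := hadj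
  exact ⟨y, x, Ne.symm hxy, by rw [move_apply_snd hxy hx]; omega,
    by linarith, (move_move hxy hx).symm⟩

lemma adjZR_comm {r : S → S → ℝ} {η ζ : S → ℕ} : AdjZR r η ζ ↔ AdjZR r ζ η :=
  ⟨adjZR_symm, adjZR_symm⟩

lemma aZR_pos {α : ℝ} (n : ℕ) : 0 < aZR α n := by
  unfold aZR
  split
  · norm_num
  · exact Real.rpow_pos_of_pos (by positivity) α

lemma gZR_nonneg {α : ℝ} (n : ℕ) : 0 ≤ gZR α n := by
  unfold gZR
  split
  · exact le_refl 0
  · exact le_of_lt (div_pos (aZR_pos _) (aZR_pos _))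

lemma gZR_pos {α : ℝ} {n : ℕ} (hn : n ≠ 0) : 0 < gZR α n := by
  unfold gZR
  rw [if_neg hn]
  exact div_pos (aZR_pos _) (aZR_pos _)

lemma condZR_move {α : ℝ} {r : S → S → ℝ} {μ : (S → ℕ) → ℝ} {x y : S} {η : S → ℕ}
    (hxy : x ≠ y) (hx : 1 ≤ η x) :
    condZR α r μ η (move x y η) = μ η * gZR α (η x) * r x y := by
  unfold condZR
  have key : ∀ x' y', (if x' ≠ y' ∧ 1 ≤ η x' ∧ move x y η = move x' y' η
      then μ η * gZR α (η x') * r x' y' else 0)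
      = if x' = x ∧ y' = y then μ η * gZR α (η x) * r x y else 0 := by
    intro x' y'
    by_cases h1 : x' = x ∧ y' = y
    · obtain ⟨rfl, rfl⟩ := h1
      rw [if_pos ⟨hxy, hx, rfl⟩, if_pos ⟨rfl, rfl⟩]
    · rw [if_neg h1]
      split
      · rename_i hc
        obtain ⟨hxy', hx', hEq⟩ := hc
        obtain ⟨h2, h3⟩ := move_inj hxy hx hxy' hx' hEq
        exact absurd ⟨h2.symm, h3.symm⟩ h1
      · rfl
  simp_rw [key]
  rw [Finset.sum_eq_single_of_mem x (Finset.mem_univ x)]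
  · rw [Finset.sum_eq_single_of_mem y (Finset.mem_univ y)]
    · rw [if_pos ⟨rfl, rfl⟩]
    · intro b _ hb
      rw [if_neg (by tauto)]
  · intro b _ hb
    exact Finset.sum_eq_zero fun y' _ => by rw [if_neg (by tauto)]

end helpers
set_option linter.unusedSectionVars false
section keylem
variable {S : Type*} [Fintype S]

lemma key_sum (α : ℝ) (r : S → S → ℝ)
    (hr0 : ∀ x y, 0 ≤ r x y) (hrdiag : ∀ x, r x x = 0)
    (μ : (S → ℕ) → ℝ) {N : ℕ} {η : S → ℕ} (hη : η ∈ configs S N)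
    (F : (S → ℕ) → ℝ) :
    (∑ ζ ∈ configs S N, if AdjZR r η ζ then condZR α r μ η ζ * F ζ else 0)
      = ∑ x, ∑ y, μ η * gZR α (η x) * r x y * F (move x y η) := by
  have step1 : ∀ ζ, (if AdjZR r η ζ then condZR α r μ η ζ * F ζ else 0)
      = ∑ x, ∑ y, (if AdjZR r η ζ ∧ (x ≠ y ∧ 1 ≤ η x ∧ ζ = move x y η)
          then μ η * gZR α (η x) * r x y * F ζ else 0) := by
    intro ζ
    by_cases hadj : AdjZR r η ζ
    · rw [if_pos hadj]
      unfold condZR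
      rw [Finset.sum_mul]
      refine Finset.sum_congr rfl fun x _ => ?_
      rw [Finset.sum_mul]
      refine Finset.sum_congr rfl fun y _ => ?_
      by_cases hc : x ≠ y ∧ 1 ≤ η x ∧ ζ = move x y η
      · rw [if_pos hc, if_pos ⟨hadj, hc⟩]
      · rw [if_neg hc, if_neg (by tauto), zero_mul]
    · rw [if_neg hadj]
      symm
      refine Finset.sum_eq_zero fun x _ => Finset.sum_eq_zero fun y _ => ?_
      rw [if_neg (by tauto)]
  rw [Finset.sum_congr rfl fun ζ _ => step1 ζ]
  rw [Finset.sum_comm]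
  refine Finset.sum_congr rfl fun x _ => ?_
  rw [Finset.sum_comm]
  refine Finset.sum_congr rfl fun y _ => ?_
  by_cases hcase : x ≠ y ∧ 1 ≤ η x ∧ 0 < r x y
  · obtain ⟨hxy, hx, hrp⟩ := hcase
    rw [Finset.sum_eq_single_of_mem (move x y η) (move_mem_configs hη)]
    · rw [if_pos ⟨⟨x, y, hxy, hx, by linarith [hr0 y x], rfl⟩, hxy, hx, rfl⟩]
    · intro ζ _ hne
      rw [if_neg]
      rintro ⟨-, -, -, rfl⟩
      exact hne rfl
  · push_neg at hcase
    have hval : gZR α (η x) * r x y = 0 := by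
      by_cases hxy : x = y
      · subst hxy; rw [hrdiag, mul_zero]
      · by_cases hx : 1 ≤ η x
        · have h0 : r x y = 0 := le_antisymm (hcase hxy hx) (hr0 x y)
          rw [h0, mul_zero]
        · have hx0 : η x = 0 := by omega
          simp [gZR, hx0]
    have hrhs : μ η * gZR α (η x) * r x y * F (move x y η) = 0 := by
      rw [mul_assoc (μ η), hval, mul_zero, zero_mul]
    rw [hrhs]
    refine Finset.sum_eq_zero fun ζ _ => ?_
    split
    · rename_i hcond
      obtain ⟨-, hxy, hx, -⟩ := hcond
      have h0 : r x y = 0 := le_antisymm (hcase hxy hx) (hr0 x y)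
      rw [h0]; ring
    · rfl

end keylem

theorem stmt_5 {S : Type*} [Fintype S] (α : ℝ) (hα : 2 < α)
    (r : S → S → ℝ) (hr0 : ∀ x y, 0 ≤ r x y) (hrdiag : ∀ x, r x x = 0)
    (hirr : ∀ x y : S, Relation.ReflTransGen (fun a b => 0 < r a b) x y)
    (m : S → ℝ) (hm : ∀ x, 0 < m x)
    (hinv : ∀ x, ∑ y, m x * r x y = ∑ y, m y * r y x)
    (Mstar : ℝ) (hMstar : IsGreatest (Set.range m) Mstar)
    (mstar : S → ℝ) (hmstar : ∀ x, mstar x = m x / Mstar)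
    (Z : ℕ → ℝ)
    (hZ : ∀ N, Z N = (N : ℝ) ^ α *
      ∑ η ∈ configs S N, (∏ x, mstar x ^ η x) / ∏ x, aZR α (η x))
    (μ : ℕ → (S → ℕ) → ℝ)
    (hμ : ∀ N η, μ N η =
      (N : ℝ) ^ α * (∏ x, mstar x ^ η x) / (Z N * ∏ x, aZR α (η x)))
    (N : ℕ) (hN : 1 ≤ N)
    (A B : Finset (S → ℕ)) (hA : A ⊆ configs S N) (hB : B ⊆ configs S N)
    (hdisj : Disjoint A B) (hAne : A.Nonempty) (hBne : B.Nonempty)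
    -- the equilibrium potential between A and B
    (h : (S → ℕ) → ℝ)
    (hh1 : ∀ η ∈ A, h η = 1) (hh0 : ∀ η ∈ B, h η = 0)
    (hharm : ∀ η ∈ configs S N, η ∉ A → η ∉ B → LgenR α r h η = 0)
    -- test function and test flow
    (ε : ℝ) (g : (S → ℕ) → ℝ)
    (hg0 : ∀ η ∈ A ∪ B, g η = 0)
    (ψ : (S → ℕ) → (S → ℕ) → ℝ)
    (hanti : ∀ η ζ, ψ η ζ = -ψ ζ η)
    (hsupp : ∀ η ζ, ¬AdjZR r η ζ → ψ η ζ = 0)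
    (hdiv : ∑ η ∈ A, divFlow S r N ψ η = 1 + ε) :
    (1 + ε + ∑ η ∈ configs S N \ (A ∪ B), h η * divFlow S r N ψ η) ^ 2 ≤
      DirN α r (μ N) N h *
        flowNormSq S α r (μ N) N (fun η ζ => PhiF α r (μ N) g η ζ - ψ η ζ) ∧
    1 + 2 * ε + 2 * ∑ η ∈ configs S N \ (A ∪ B), h η * divFlow S r N ψ η ≤
      DirN α r (μ N) N h *
        flowNormSq S α r (μ N) N (fun η ζ => PhiF α r (μ N) g η ζ - ψ η ζ) := by
  classical
  set X := ∑ η ∈ configs S N \ (A ∪ B), h η * divFlow S r N ψ η with hX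
  -- positivity facts
  have hMpos : 0 < Mstar := by
    obtain ⟨x0, hx0⟩ := hMstar.1
    rw [← hx0]; exact hm x0
  have hmsp : ∀ x, 0 < mstar x := fun x => by
    rw [hmstar x]; exact div_pos (hm x) hMpos
  have hNpos : (0:ℝ) < (N:ℝ) ^ α :=
    Real.rpow_pos_of_pos (by exact_mod_cast hN) α
  have hconfne : (configs S N).Nonempty := ⟨hAne.choose, hA hAne.choose_spec⟩
  have hμpos : ∀ η, 0 < μ N η := by
    have hZpos : 0 < Z N := by
      rw [hZ]
      refine mul_pos hNpos (Finset.sum_pos (fun η _ => ?_) hconfne)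
      exact div_pos (Finset.prod_pos fun x _ => pow_pos (hmsp x) _)
        (Finset.prod_pos fun x _ => aZR_pos _)
    intro η
    rw [hμ]
    exact div_pos (mul_pos hNpos (Finset.prod_pos fun x _ => pow_pos (hmsp x) _))
      (mul_pos hZpos (Finset.prod_pos fun x _ => aZR_pos _))
  -- positivity of symmetrized conductance on adjacent pairs
  have hcspos : ∀ η ζ, AdjZR r η ζ → 0 < csymZR α r (μ N) η ζ := by
    rintro η ζ ⟨x, y, hxy, hx, hr, hζeq⟩
    have hζy : 1 ≤ ζ y := by rw [hζeq, move_apply_snd hxy hx]; omega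
    have h1 : condZR α r (μ N) η ζ = μ N η * gZR α (η x) * r x y := by
      rw [hζeq]; exact condZR_move hxy hx
    have hback : η = move y x ζ := by rw [hζeq, move_move hxy hx]
    have h2 : condZR α r (μ N) ζ η = μ N ζ * gZR α (ζ y) * r y x := by
      conv_lhs => rw [hback]
      exact condZR_move (Ne.symm hxy) hζy
    unfold csymZR
    rw [h1, h2]
    have g1 : 0 < gZR α (η x) := gZR_pos (by omega)
    have g2 : 0 < gZR α (ζ y) := gZR_pos (by omega)
    have m1 := hμpos η
    have m2 := hμpos ζ
    rcases lt_or_ge 0 (r x y) with hp | hp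
    · have h3 : 0 ≤ μ N ζ * gZR α (ζ y) * r y x :=
        mul_nonneg (mul_nonneg m2.le g2.le) (hr0 y x)
      have h4 : 0 < μ N η * gZR α (η x) * r x y := mul_pos (mul_pos m1 g1) hp
      linarith
    · have hxy0 : r x y = 0 := le_antisymm hp (hr0 x y)
      have hyx : 0 < r y x := by rw [hxy0] at hr; linarith
      have h4 : 0 < μ N ζ * gZR α (ζ y) * r y x := mul_pos (mul_pos m2 g2) hyx
      have h3 : μ N η * gZR α (η x) * r x y = 0 := by rw [hxy0, mul_zero]
      linarith
  -- antisymmetry of the total flow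
  have hΦanti : ∀ η ζ, PhiF α r (μ N) g η ζ - ψ η ζ
      = -(PhiF α r (μ N) g ζ η - ψ ζ η) := by
    intro η ζ
    rw [hanti η ζ]
    unfold PhiF
    ring
  -- Step 1: the Φ_g part of the pairing vanishes
  have hPΦ : ∑ η ∈ configs S N, ∑ ζ ∈ configs S N,
      (if AdjZR r η ζ then h η * PhiF α r (μ N) g η ζ else 0) = 0 := by
    have e1 : ∀ η ζ, (if AdjZR r η ζ then h η * PhiF α r (μ N) g η ζ else 0)
        = (if AdjZR r η ζ then h η * (g η * condZR α r (μ N) η ζ) else 0)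
          - (if AdjZR r η ζ then h ζ * (g η * condZR α r (μ N) η ζ) else 0)
          + ((if AdjZR r η ζ then h ζ * (g η * condZR α r (μ N) η ζ) else 0)
            - (if AdjZR r η ζ then h η * (g ζ * condZR α r (μ N) ζ η) else 0)) := by
      intro η ζ
      unfold PhiF
      split <;> ring
    rw [Finset.sum_congr rfl fun η _ => Finset.sum_congr rfl fun ζ _ => e1 η ζ]
    simp_rw [Finset.sum_add_distrib, Finset.sum_sub_distrib]
    have e2 : ∑ η ∈ configs S N, ∑ ζ ∈ configs S N,
        (if AdjZR r η ζ then h η * (g ζ * condZR α r (μ N) ζ η) else 0)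
        = ∑ η ∈ configs S N, ∑ ζ ∈ configs S N,
        (if AdjZR r η ζ then h ζ * (g η * condZR α r (μ N) η ζ) else 0) := by
      rw [Finset.sum_comm]
      refine Finset.sum_congr rfl fun η _ => Finset.sum_congr rfl fun ζ _ => ?_
      by_cases hadj : AdjZR r η ζ
      · rw [if_pos (adjZR_symm hadj), if_pos hadj]
      · rw [if_neg (fun hc => hadj (adjZR_symm hc)), if_neg hadj]
    rw [e2, sub_self, add_zero]
    rw [← Finset.sum_sub_distrib]
    refine Finset.sum_eq_zero fun η hηH => ?_
    rw [← Finset.sum_sub_distrib]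
    have ea : ∀ ζ, (if AdjZR r η ζ then h η * (g η * condZR α r (μ N) η ζ) else 0)
        - (if AdjZR r η ζ then h ζ * (g η * condZR α r (μ N) η ζ) else 0)
        = g η * ((if AdjZR r η ζ then condZR α r (μ N) η ζ * h η else 0)
          - (if AdjZR r η ζ then condZR α r (μ N) η ζ * h ζ else 0)) := by
      intro ζ
      split <;> ring
    rw [Finset.sum_congr rfl fun ζ _ => ea ζ]
    rw [← Finset.mul_sum, Finset.sum_sub_distrib]
    have ka : (∑ ζ ∈ configs S N, if AdjZR r η ζ then condZR α r (μ N) η ζ * h η else 0)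
        = ∑ x, ∑ y, μ N η * gZR α (η x) * r x y * h η :=
      key_sum α r hr0 hrdiag (μ N) hηH (fun _ => h η)
    have kb : (∑ ζ ∈ configs S N, if AdjZR r η ζ then condZR α r (μ N) η ζ * h ζ else 0)
        = ∑ x, ∑ y, μ N η * gZR α (η x) * r x y * h (move x y η) :=
      key_sum α r hr0 hrdiag (μ N) hηH h
    rw [ka, kb]
    by_cases hAB : η ∈ A ∪ B
    · rw [hg0 η hAB, zero_mul]
    · have hL := hharm η hηH (fun hc => hAB (Finset.mem_union_left _ hc))
        (fun hc => hAB (Finset.mem_union_right _ hc))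
      have e3 : (∑ x, ∑ y, μ N η * gZR α (η x) * r x y * h η)
          - ∑ x, ∑ y, μ N η * gZR α (η x) * r x y * h (move x y η)
          = -(μ N η * LgenR α r h η) := by
        unfold LgenR
        rw [Finset.mul_sum, ← Finset.sum_sub_distrib, ← Finset.sum_neg_distrib]
        refine Finset.sum_congr rfl fun x _ => ?_
        rw [Finset.mul_sum, ← Finset.sum_sub_distrib, ← Finset.sum_neg_distrib]
        exact Finset.sum_congr rfl fun y _ => by ring
      rw [e3, hL, mul_zero, neg_zero, mul_zero]
  -- Step 2: the ψ part of the pairing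
  have hPψ : ∑ η ∈ configs S N, ∑ ζ ∈ configs S N,
      (if AdjZR r η ζ then h η * ψ η ζ else 0) = 1 + ε + X := by
    have e : ∀ η, (∑ ζ ∈ configs S N, if AdjZR r η ζ then h η * ψ η ζ else 0)
        = h η * divFlow S r N ψ η := by
      intro η
      unfold divFlow
      rw [Finset.mul_sum]
      exact Finset.sum_congr rfl fun ζ _ => by split <;> ring
    rw [Finset.sum_congr rfl fun η _ => e η]
    have hsub : A ∪ B ⊆ configs S N := Finset.union_subset hA hB
    rw [← Finset.sum_sdiff hsub, Finset.sum_union hdisj]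
    have hA1 : ∑ η ∈ A, h η * divFlow S r N ψ η = 1 + ε := by
      rw [← hdiv]
      exact Finset.sum_congr rfl fun η hη => by rw [hh1 η hη, one_mul]
    have hB0 : ∑ η ∈ B, h η * divFlow S r N ψ η = 0 :=
      Finset.sum_eq_zero fun η hη => by rw [hh0 η hη, zero_mul]
    rw [hA1, hB0, hX]
    ring
  -- Step 3: the pairing sum equals -2(1+ε+X)
  have hT : ∑ η ∈ configs S N, ∑ ζ ∈ configs S N,
      (if AdjZR r η ζ then (h η - h ζ) * (PhiF α r (μ N) g η ζ - ψ η ζ) else 0)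
      = -2 * (1 + ε + X) := by
    have e1 : ∀ η ζ, (if AdjZR r η ζ then (h η - h ζ) * (PhiF α r (μ N) g η ζ - ψ η ζ) else 0)
        = (if AdjZR r η ζ then h η * (PhiF α r (μ N) g η ζ - ψ η ζ) else 0)
          - (if AdjZR r η ζ then h ζ * (PhiF α r (μ N) g η ζ - ψ η ζ) else 0) := by
      intro η ζ
      split <;> ring
    rw [Finset.sum_congr rfl fun η _ => Finset.sum_congr rfl fun ζ _ => e1 η ζ]
    simp_rw [Finset.sum_sub_distrib]
    have hswap : ∑ η ∈ configs S N, ∑ ζ ∈ configs S N,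
        (if AdjZR r η ζ then h ζ * (PhiF α r (μ N) g η ζ - ψ η ζ) else 0)
        = - ∑ η ∈ configs S N, ∑ ζ ∈ configs S N,
          (if AdjZR r η ζ then h η * (PhiF α r (μ N) g η ζ - ψ η ζ) else 0) := by
      rw [Finset.sum_comm, ← Finset.sum_neg_distrib]
      refine Finset.sum_congr rfl fun η _ => ?_
      rw [← Finset.sum_neg_distrib]
      refine Finset.sum_congr rfl fun ζ _ => ?_
      by_cases hadj : AdjZR r η ζ
      · rw [if_pos (adjZR_symm hadj), if_pos hadj, hΦanti ζ η]
        ring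
      · rw [if_neg (fun hc => hadj (adjZR_symm hc)), if_neg hadj, neg_zero]
    rw [hswap]
    have e2 : ∀ η ζ, (if AdjZR r η ζ then h η * (PhiF α r (μ N) g η ζ - ψ η ζ) else 0)
        = (if AdjZR r η ζ then h η * PhiF α r (μ N) g η ζ else 0)
          - (if AdjZR r η ζ then h η * ψ η ζ else 0) := by
      intro η ζ
      split <;> ring
    rw [Finset.sum_congr rfl fun η _ => Finset.sum_congr rfl fun ζ _ => e2 η ζ]
    simp_rw [Finset.sum_sub_distrib]
    rw [hPΦ, hPψ]
    ring
  -- Step 4: the Dirichlet form as a sum over adjacent pairs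
  have hDhalf : ∑ η ∈ configs S N, ∑ ζ ∈ configs S N,
      (if AdjZR r η ζ then condZR α r (μ N) η ζ * (h ζ - h η) ^ 2 else 0)
      = 2 * DirN α r (μ N) N h := by
    unfold DirN
    rw [← mul_assoc]
    norm_num
    refine Finset.sum_congr rfl fun η hηH => ?_
    exact key_sum α r hr0 hrdiag (μ N) hηH (fun ζ => (h ζ - h η) ^ 2)
  have hDsym : ∑ η ∈ configs S N, ∑ ζ ∈ configs S N,
      (if AdjZR r η ζ then csymZR α r (μ N) η ζ * (h η - h ζ) ^ 2 else 0)
      = 2 * DirN α r (μ N) N h := by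
    have hswap2 : ∑ η ∈ configs S N, ∑ ζ ∈ configs S N,
        (if AdjZR r η ζ then condZR α r (μ N) ζ η * (h η - h ζ) ^ 2 else 0)
        = ∑ η ∈ configs S N, ∑ ζ ∈ configs S N,
          (if AdjZR r η ζ then condZR α r (μ N) η ζ * (h ζ - h η) ^ 2 else 0) := by
      rw [Finset.sum_comm]
      refine Finset.sum_congr rfl fun η _ => Finset.sum_congr rfl fun ζ _ => ?_
      by_cases hadj : AdjZR r η ζ
      · rw [if_pos (adjZR_symm hadj), if_pos hadj]
      · rw [if_neg (fun hc => hadj (adjZR_symm hc)), if_neg hadj]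
    have expand : ∀ η ζ, (if AdjZR r η ζ then csymZR α r (μ N) η ζ * (h η - h ζ) ^ 2 else 0)
        = (1/2) * (if AdjZR r η ζ then condZR α r (μ N) η ζ * (h ζ - h η) ^ 2 else 0)
          + (1/2) * (if AdjZR r η ζ then condZR α r (μ N) ζ η * (h η - h ζ) ^ 2 else 0) := by
      intro η ζ
      unfold csymZR
      split <;> ring
    rw [Finset.sum_congr rfl fun η _ => Finset.sum_congr rfl fun ζ _ => expand η ζ]
    simp_rw [Finset.sum_add_distrib, ← Finset.mul_sum]
    rw [hswap2, hDhalf]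
    ring
  -- Step 5: flow norm as a plain sum
  have hNrm : ∑ η ∈ configs S N, ∑ ζ ∈ configs S N,
      (if AdjZR r η ζ then (PhiF α r (μ N) g η ζ - ψ η ζ) ^ 2 / csymZR α r (μ N) η ζ else 0)
      = 2 * flowNormSq S α r (μ N) N (fun η ζ => PhiF α r (μ N) g η ζ - ψ η ζ) := by
    unfold flowNormSq
    ring
  -- Step 6: Cauchy-Schwarz
  have hCS : (∑ η ∈ configs S N, ∑ ζ ∈ configs S N,
      (if AdjZR r η ζ then (h η - h ζ) * (PhiF α r (μ N) g η ζ - ψ η ζ) else 0)) ^ 2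
      ≤ (∑ η ∈ configs S N, ∑ ζ ∈ configs S N,
          (if AdjZR r η ζ then csymZR α r (μ N) η ζ * (h η - h ζ) ^ 2 else 0))
        * ∑ η ∈ configs S N, ∑ ζ ∈ configs S N,
          (if AdjZR r η ζ then (PhiF α r (μ N) g η ζ - ψ η ζ) ^ 2 / csymZR α r (μ N) η ζ else 0) := by
    set u : (S → ℕ) × (S → ℕ) → ℝ := fun p =>
      if AdjZR r p.1 p.2 then Real.sqrt (csymZR α r (μ N) p.1 p.2) * (h p.1 - h p.2) else 0 with hu
    set v : (S → ℕ) × (S → ℕ) → ℝ := fun p =>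
      if AdjZR r p.1 p.2 then (PhiF α r (μ N) g p.1 p.2 - ψ p.1 p.2) / Real.sqrt (csymZR α r (μ N) p.1 p.2) else 0 with hv
    have CS := Finset.sum_mul_sq_le_sq_mul_sq (configs S N ×ˢ configs S N) u v
    have conv1 : ∑ p ∈ configs S N ×ˢ configs S N, u p * v p
        = ∑ η ∈ configs S N, ∑ ζ ∈ configs S N,
          (if AdjZR r η ζ then (h η - h ζ) * (PhiF α r (μ N) g η ζ - ψ η ζ) else 0) := by
      rw [Finset.sum_product]
      refine Finset.sum_congr rfl fun η _ => Finset.sum_congr rfl fun ζ _ => ?_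
      simp only [hu, hv]
      by_cases hadj : AdjZR r η ζ
      · rw [if_pos hadj, if_pos hadj, if_pos hadj]
        have hs : Real.sqrt (csymZR α r (μ N) η ζ) ≠ 0 :=
          ne_of_gt (Real.sqrt_pos.mpr (hcspos _ _ hadj))
        field_simp
      · rw [if_neg hadj, if_neg hadj, if_neg hadj, zero_mul]
    have conv2 : ∑ p ∈ configs S N ×ˢ configs S N, u p ^ 2
        = ∑ η ∈ configs S N, ∑ ζ ∈ configs S N,
          (if AdjZR r η ζ then csymZR α r (μ N) η ζ * (h η - h ζ) ^ 2 else 0) := by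
      rw [Finset.sum_product]
      refine Finset.sum_congr rfl fun η _ => Finset.sum_congr rfl fun ζ _ => ?_
      simp only [hu]
      by_cases hadj : AdjZR r η ζ
      · rw [if_pos hadj, if_pos hadj, mul_pow, Real.sq_sqrt (hcspos _ _ hadj).le]
      · rw [if_neg hadj, if_neg hadj]
        ring
    have conv3 : ∑ p ∈ configs S N ×ˢ configs S N, v p ^ 2
        = ∑ η ∈ configs S N, ∑ ζ ∈ configs S N,
          (if AdjZR r η ζ then (PhiF α r (μ N) g η ζ - ψ η ζ) ^ 2 / csymZR α r (μ N) η ζ else 0) := by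
      rw [Finset.sum_product]
      refine Finset.sum_congr rfl fun η _ => Finset.sum_congr rfl fun ζ _ => ?_
      simp only [hv]
      by_cases hadj : AdjZR r η ζ
      · rw [if_pos hadj, if_pos hadj, div_pow, Real.sq_sqrt (hcspos _ _ hadj).le]
      · rw [if_neg hadj, if_neg hadj]
        ring
    rw [conv1, conv2, conv3] at CS
    exact CS
  -- conclusion
  rw [hT, hDsym, hNrm] at hCS
  have key : (1 + ε + X) ^ 2
      ≤ DirN α r (μ N) N h *
        flowNormSq S α r (μ N) N (fun η ζ => PhiF α r (μ N) g η ζ - ψ η ζ) := by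
    nlinarith [hCS]
  constructor
  · exact key
  · nlinarith [key, sq_nonneg (ε + X)]
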